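/- Let X be a finite-dimensional real vector space, q an asymmetric norm on X, and A ⊆ X a strongly compact set. Then the convex hull conv(A) is also strongly compact. -/

import Mathlib

open Pointwise Set

/-- An asymmetric norm on a real vector space `X`. -/
structure IsAsymmetricNorm {X : Type*} [AddCommGroup X] [Module ℝ X] (q : X → ℝ) : Prop where
  nonneg : ∀ x, 0 ≤ q x
  smul_eq : ∀ a : ℝ, 0 ≤ a → ∀ x, q (a • x) = a * q x
  add_le : ∀ x y, q (x + y) ≤ q x + q y
  eq_zero : ∀ x, q x = 0 → q (-x) = 0 → x = 0

/-- The topology `τ_q` generated by the open balls of `q`. -/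
def asymTop {X : Type*} [AddCommGroup X] [Module ℝ X] (q : X → ℝ) : TopologicalSpace X :=
  TopologicalSpace.generateFrom {U | ∃ x : X, ∃ ε : ℝ, 0 < ε ∧ U = {y | q (y - x) < ε}}

/-- The symmetrization `q^s` of `q`. -/
def symNorm {X : Type*} [AddCommGroup X] (q : X → ℝ) (x : X) : ℝ := max (q x) (q (-x))

/-- The cone `θ_q = {x : q x = 0}`. -/
def theta {X : Type*} [AddCommGroup X] (q : X → ℝ) : Set X := {x | q x = 0}

/-- The closed ball `B_r^q[x] = {y : q (y - x) ≤ r}`. -/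
def closedBallA {X : Type*} [AddCommGroup X] (q : X → ℝ) (x : X) (r : ℝ) : Set X :=
  {y | q (y - x) ≤ r}

/-- A set `K` is strongly compact (w.r.t. the asymmetric norm `q`) if there is a set `S`,
compact in the topology of the norm `q^s`, with `S ⊆ K ⊆ S + θ_q`. -/
def StronglyCompact {X : Type*} [AddCommGroup X] [Module ℝ X] (q : X → ℝ) (K : Set X) : Prop :=
  ∃ S : Set X, @IsCompact X (asymTop (symNorm q)) S ∧ S ⊆ K ∧ K ⊆ S + theta q

/-- `q` is right bounded if `r • B_1^q[0] ⊆ B_1^{q^s}[0] + θ_q` for some `r > 0`. -/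
def RightBounded {X : Type*} [AddCommGroup X] [Module ℝ X] (q : X → ℝ) : Prop :=
  ∃ r : ℝ, 0 < r ∧ r • closedBallA q 0 1 ⊆ closedBallA (symNorm q) 0 1 + theta q

/-- `q` is 1-bounded if `B_1^q[0] ⊆ B_1^{q^s}[0] + θ_q`. -/
def OneBounded {X : Type*} [AddCommGroup X] [Module ℝ X] (q : X → ℝ) : Prop :=
  closedBallA q 0 1 ⊆ closedBallA (symNorm q) 0 1 + theta q

/-- Two asymmetric norms are equivalent if `κ·q ≤ p ≤ l·q` for some `κ, l > 0`. -/
def EquivNorms {X : Type*} [AddCommGroup X] (p q : X → ℝ) : Prop :=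
  ∃ κ l : ℝ, 0 < κ ∧ 0 < l ∧ ∀ x, κ * q x ≤ p x ∧ p x ≤ l * q x

/-- `X` is strongly locally compact (w.r.t. `τ_q`) if every point has a local base of
strongly compact sets. -/
def StronglyLocallyCompact {X : Type*} [AddCommGroup X] [Module ℝ X] (q : X → ℝ) : Prop :=
  ∀ x : X, ∀ U ∈ @nhds X (asymTop q) x,
    ∃ K : Set X, StronglyCompact q K ∧ K ∈ @nhds X (asymTop q) x ∧ K ⊆ U


theorem mySumExtend {ι κ M : Type*} [Fintype ι] [Fintype κ] [AddCommMonoid M]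
    (e : ι ↪ κ) (F : κ → M) (hF : ∀ i, (¬ ∃ j, e j = i) → F i = 0) :
    ∑ i, F i = ∑ j, F (e j) := by
  classical
  calc ∑ i, F i = ∑ i ∈ Finset.univ.image e, F i := by
        refine (Finset.sum_subset (Finset.subset_univ _) fun i _ hi => ?_).symm
        exact hF i fun ⟨j, hj⟩ => hi (Finset.mem_image.2 ⟨j, Finset.mem_univ j, hj⟩)
    _ = ∑ j, F (e j) := Finset.sum_image fun a _ b _ h => e.injective h

theorem myIsCompactConvexHull {E : Type*} [NormedAddCommGroup E] [NormedSpace ℝ E]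
    [FiniteDimensional ℝ E] {s : Set E} (hs : IsCompact s) : IsCompact (convexHull ℝ s) := by
  classical
  rcases s.eq_empty_or_nonempty with rfl | ⟨s₀, hs₀⟩
  · simpa using isCompact_empty
  set n := Module.finrank ℝ E + 1 with hn
  set K : Set ((Fin n → ℝ) × (Fin n → E)) :=
    (stdSimplex ℝ (Fin n)) ×ˢ (Set.univ.pi fun _ => s) with hK
  have hKc : IsCompact K := (isCompact_stdSimplex _ _).prod (isCompact_univ_pi fun _ => hs)
  set g : (Fin n → ℝ) × (Fin n → E) → E := fun p => ∑ i, p.1 i • p.2 i with hg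
  have hgc : Continuous g := by
    apply continuous_finset_sum
    intro i _
    exact ((continuous_apply i).comp continuous_fst).smul
      ((continuous_apply i).comp continuous_snd)
  have himg : g '' K = convexHull ℝ s := by
    apply Subset.antisymm
    · rintro _ ⟨⟨w, z⟩, ⟨hw, hz⟩, rfl⟩
      exact (convex_convexHull ℝ s).sum_mem (fun i _ => hw.1 i)
        hw.2 (fun i _ => subset_convexHull ℝ s (hz i (mem_univ i)))
    · intro x hx
      obtain ⟨ι, hι, z, w, hzs, hind, hwpos, hwsum, hwz⟩ :=
        eq_pos_convex_span_of_mem_convexHull hx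
      have hcard : Fintype.card ι ≤ Fintype.card (Fin n) := by
        rw [Fintype.card_fin]
        exact hind.card_le_finrank_succ.trans
          (add_le_add_left (Submodule.finrank_le _) 1)
      obtain ⟨e⟩ := Function.Embedding.nonempty_of_card_le hcard
      set W : Fin n → ℝ := Function.extend (⇑e) w 0 with hWdef
      set Z : Fin n → E := Function.extend (⇑e) z (fun _ => s₀) with hZdef
      have hWr : ∀ j, W (e j) = w j := fun j => e.injective.extend_apply _ _ _
      have hZr : ∀ j, Z (e j) = z j := fun j => e.injective.extend_apply _ _ _
      have hWo : ∀ i, (¬ ∃ j, e j = i) → W i = 0 := fun i h => Function.extend_apply' _ _ _ h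
      have hZo : ∀ i, (¬ ∃ j, e j = i) → Z i = s₀ := fun i h => Function.extend_apply' _ _ _ h
      refine ⟨(W, Z), ⟨⟨?_, ?_⟩, ?_⟩, ?_⟩
      · intro i
        rcases em (∃ j, e j = i) with ⟨j, rfl⟩ | h
        · rw [show (W, Z).1 = W from rfl, hWr]; exact (hwpos j).le
        · rw [show (W, Z).1 = W from rfl, hWo i h]
      · show ∑ i, W i = 1
        rw [mySumExtend e W hWo]
        simp [hWr, hwsum]
      · intro i _
        show Z i ∈ s
        rcases em (∃ j, e j = i) with ⟨j, rfl⟩ | h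
        · rw [hZr]; exact hzs ⟨j, rfl⟩
        · rw [hZo i h]; exact hs₀
      · show ∑ i, W i • Z i = x
        rw [mySumExtend e (fun i => W i • Z i) (fun i h => by simp [hWo i h])]
        simp only [hWr, hZr]
        exact hwz
  rw [← himg]
  exact hKc.image hgc


theorem statement7 {X : Type*} [AddCommGroup X] [Module ℝ X] [FiniteDimensional ℝ X]
    (q : X → ℝ) (hq : IsAsymmetricNorm q) (A : Set X)
    (hA : StronglyCompact q A) :
    StronglyCompact q (convexHull ℝ A) := by
  classical
  obtain ⟨S, hScomp, hSA, hAS⟩ := hA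
  have hq0 : q 0 = 0 := by
    have := hq.smul_eq 0 le_rfl 0
    simpa using this
  letI N : NormedAddCommGroup X := AddGroupNorm.toNormedAddCommGroup
    { toFun := symNorm q
      map_zero' := by simp [symNorm, hq0]
      add_le' := fun x y => by
        refine max_le ?_ ?_
        · exact (hq.add_le x y).trans
            (add_le_add (le_max_left _ _) (le_max_left _ _))
        · rw [neg_add]
          exact (hq.add_le (-x) (-y)).trans
            (add_le_add (le_max_right _ _) (le_max_right _ _))
      neg' := fun x => by simp only [symNorm, neg_neg]; exact max_comm _ _
      eq_zero_of_map_eq_zero' := fun x h => by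
        have h1 : q x = 0 := le_antisymm (h ▸ le_max_left _ _) (hq.nonneg x)
        have h2 : q (-x) = 0 := le_antisymm (h ▸ le_max_right _ _) (hq.nonneg (-x))
        exact hq.eq_zero x h1 h2 }
  have hnorm : ∀ v : X, ‖v‖ = symNorm q v := fun _ => rfl
  letI : NormedSpace ℝ X :=
    { norm_smul_le := fun a x => by
        rw [hnorm, hnorm]
        rcases le_or_gt 0 a with ha | ha
        · have h1 : q (a • x) = a * q x := hq.smul_eq a ha x
          have h2 : q (-(a • x)) = a * q (-x) := by
            rw [← smul_neg]; exact hq.smul_eq a ha (-x)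
          rw [symNorm, h1, h2, Real.norm_eq_abs, abs_of_nonneg ha, symNorm,
            mul_max_of_nonneg _ _ ha]
        · have ha' : 0 ≤ -a := by linarith
          have h1 : q (a • x) = -a * q (-x) := by
            rw [show a • x = (-a) • (-x) by rw [smul_neg, neg_smul, neg_neg]]
            exact hq.smul_eq (-a) ha' (-x)
          have h2 : q (-(a • x)) = -a * q x := by
            rw [← neg_smul]; exact hq.smul_eq (-a) ha' x
          rw [symNorm, h1, h2, Real.norm_eq_abs, abs_of_neg ha, symNorm,
            mul_max_of_nonneg _ _ ha']
          exact (max_comm _ _).le }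
  have hball : ∀ (x : X) (ε : ℝ), Metric.ball x ε = {y | symNorm q (y - x) < ε} := by
    intro x ε
    ext y
    simp [Metric.mem_ball, dist_eq_norm, hnorm]
  have htop : asymTop (symNorm q) = UniformSpace.toTopologicalSpace := by
    refine le_antisymm ?_ ?_
    · -- every instance-open set is generateFrom-open
      intro U hU
      have h := fun (x : X) (hx : x ∈ U) => Metric.isOpen_iff.mp hU x hx
      choose ε hεpos hεball using h
      have hU' : U = ⋃ x : U, Metric.ball x.1 (ε x.1 x.2) := by
        ext y
        constructor
        · intro hy
          exact mem_iUnion.2 ⟨⟨y, hy⟩, Metric.mem_ball_self (hεpos y hy)⟩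
        · intro hy
          obtain ⟨x, hx⟩ := mem_iUnion.1 hy
          exact hεball x.1 x.2 hx
      rw [hU', ← sUnion_range]
      apply TopologicalSpace.GenerateOpen.sUnion
      rintro _ ⟨x, rfl⟩
      apply TopologicalSpace.GenerateOpen.basic
      exact ⟨x.1, ε x.1 x.2, hεpos x.1 x.2, (hball _ _)⟩
    · refine le_generateFrom ?_
      rintro U ⟨x, ε, hε, rfl⟩
      rw [← hball]
      exact Metric.isOpen_ball
  have hSc : IsCompact S := by rwa [htop] at hScomp
  have hhull : IsCompact (convexHull ℝ S) := myIsCompactConvexHull hSc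
  have hθ : Convex ℝ (theta q) := by
    intro x hx y hy a b ha hb hab
    have h1 : q (a • x + b • y) ≤ a * q x + b * q y := by
      calc q (a • x + b • y) ≤ q (a • x) + q (b • y) := hq.add_le _ _
        _ = a * q x + b * q y := by rw [hq.smul_eq a ha, hq.smul_eq b hb]
    have : q (a • x + b • y) ≤ 0 := by
      rw [hx, hy] at h1; simpa using h1
    exact le_antisymm this (hq.nonneg _)
  refine ⟨convexHull ℝ S, by rw [htop]; exact hhull, convexHull_mono hSA, ?_⟩
  calc convexHull ℝ A ⊆ convexHull ℝ (S + theta q) := convexHull_mono hAS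
    _ = convexHull ℝ S + convexHull ℝ (theta q) := convexHull_add _ _
    _ = convexHull ℝ S + theta q := by rw [hθ.convexHull_eq]
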